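/- The quadratic Plücker relations hold on the image of the Plücker embedding: for an r-dimensional subspace L of a finite-dimensional vector space V with Plücker coordinates X_S (indexed by strictly increasing r-tuples S from a basis of V), for any r-tuples S = (s₁,...,sᵣ), S' = (s'₁,...,s'ᵣ) and any index position j, one has X_S · X_{S'} = ∑_{l=1}^{r} X_{(s₁,...,s_{j-1},s'_l,s_{j+1},...,sᵣ)} · X_{(s'₁,...,s'_{l-1},s_j,s'_{l+1},...,s'ᵣ)}, with the sign/antisymmetry convention that X of a tuple with a repeated index is 0 and X is alternating in its indices. -/

import Mathlib

open Module

section aux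
variable {k : Type*} [Field k] {r : ℕ}

open Matrix in
private lemma col_aux (x : Fin (r+1) → Fin r → k) (b : Fin r) :
    ∑ m : Fin (r+1), (-1 : k) ^ (m : ℕ) * x m b *
      Matrix.det (Matrix.of fun i i' => x (m.succAbove i) i') = 0 := by
  have h := Matrix.det_succ_column_zero
    (Matrix.of fun (m : Fin (r+1)) i => Fin.cons (x m b) (x m) i)
  have h0 : (Matrix.of fun (m : Fin (r+1)) i => Fin.cons (x m b) (x m) i).det = 0 :=
    Matrix.det_zero_of_column_eq (i := 0) (j := b.succ) (Fin.succ_ne_zero b).symm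
      (fun m => by simp)
  rw [h0] at h
  refine Eq.trans ?_ h.symm
  apply Finset.sum_congr rfl
  intro m _
  simp only [Matrix.of_apply, Fin.cons_zero]
  congr 1

end aux

section key
variable {k : Type*} [Field k] {r : ℕ}

open Matrix in
private lemma pluecker_matrix_key (U V : Matrix (Fin r) (Fin r) k) (j : Fin r) :
    U.det * V.det = ∑ m : Fin r, (U.updateRow j (V m)).det * (V.updateRow m (U j)).det := by
  classical
  set c : (Fin r → k) →ₗ[k] k := (LinearMap.proj j).comp (Matrix.cramer Uᵀ) with hcdef
  have hc : ∀ v : Fin r → k, c v = (U.updateRow j v).det := by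
    intro v
    have : (U.updateRow j v)ᵀ = Uᵀ.updateCol j v := by
      rw [Matrix.updateCol_transpose]
    simp [hcdef, Matrix.cramer_apply, ← Matrix.det_transpose (U.updateRow j v), this]
  set x : Fin (r+1) → Fin r → k := Fin.cons (U j) (fun m => V m) with hxdef
  have hzero : ∑ m : Fin (r+1), (-1:k)^(m:ℕ) * c (x m) *
      Matrix.det (Matrix.of fun i i' => x (m.succAbove i) i') = 0 := by
    have expand : ∀ m, c (x m) = ∑ b : Fin r, x m b * c (fun j' => if b = j' then 1 else 0) :=
      fun m => by rw [LinearMap.pi_apply_eq_sum_univ]; rfl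
    calc ∑ m : Fin (r+1), (-1:k)^(m:ℕ) * c (x m) *
            Matrix.det (Matrix.of fun i i' => x (m.succAbove i) i')
        = ∑ b : Fin r, c (fun j' => if b = j' then 1 else 0) *
            ∑ m : Fin (r+1), (-1:k)^(m:ℕ) * x m b *
              Matrix.det (Matrix.of fun i i' => x (m.succAbove i) i') := by
          simp_rw [expand, Finset.mul_sum, Finset.sum_mul]
          rw [Finset.sum_comm]
          exact Finset.sum_congr rfl fun b _ => Finset.sum_congr rfl fun m _ => by ring
      _ = 0 := by
          simp only [col_aux, mul_zero]
          exact Finset.sum_const_zero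
  rw [Fin.sum_univ_succ] at hzero
  have h0 : (-1:k)^((0 : Fin (r+1)):ℕ) * c (x 0) *
      Matrix.det (Matrix.of fun i i' => x ((0 : Fin (r+1)).succAbove i) i') = U.det * V.det := by
    have hx0 : x 0 = U j := by simp [hxdef]
    have : (Matrix.of fun i i' => x ((0 : Fin (r+1)).succAbove i) i') = V := by
      ext i i'
      simp [hxdef, Fin.succAbove_zero]
    rw [this, hx0, hc, Matrix.updateRow_eq_self]
    simp
  have hterm : ∀ m' : Fin r, (-1:k)^((Fin.succ m' : Fin (r+1)):ℕ) * c (x m'.succ) *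
      Matrix.det (Matrix.of fun i i' => x ((Fin.succ m').succAbove i) i')
      = -((U.updateRow j (V m')).det * (V.updateRow m' (U j)).det) := by
    intro m'
    have hxm : x m'.succ = V m' := by simp [hxdef]
    set W := V.updateRow m' (U j) with hW
    set y : Matrix (Fin r) (Fin r) k := Matrix.of fun i i' => x ((Fin.succ m').succAbove i) i'
      with hy
    have hsub : y.submatrix (Fin.cycleRange m') id = W := by
      ext i i'
      simp only [Matrix.submatrix_apply, hy, Matrix.of_apply, id_eq, Fin.succAbove_cycleRange]
      rcases eq_or_ne i m' with h | h
      · subst h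
        rw [Equiv.swap_apply_right]
        simp [hxdef, hW]
      · rw [Equiv.swap_apply_of_ne_of_ne (Fin.succ_ne_zero i)
          ((Fin.succ_injective _).ne h)]
        simp [hxdef, hW, Matrix.updateRow_apply, h]
    have hdet : W.det = (-1:k)^(m' : ℕ) * y.det := by
      have := Matrix.det_permute (Fin.cycleRange m') y
      rw [hsub] at this
      rw [this, Fin.sign_cycleRange]
      norm_cast
    have hysign : y.det = (-1:k)^(m' : ℕ) * W.det := by
      rw [hdet, ← mul_assoc, ← pow_add, ← two_mul, pow_mul]
      norm_num
    rw [hxm, hc, hysign]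
    have hv : ((Fin.succ m' : Fin (r+1)) : ℕ) = (m' : ℕ) + 1 := Fin.val_succ m'
    have hpow : ((-1:k)^(m':ℕ)) * ((-1:k)^(m':ℕ)) = 1 := by
      rw [← pow_add, ← two_mul, pow_mul, neg_one_sq, one_pow]
    rw [hv, pow_succ]
    linear_combination (-((U.updateRow j (V m')).det * W.det)) * hpow
  rw [h0] at hzero
  have hsum : ∑ m' : Fin r, (-1:k)^((Fin.succ m' : Fin (r+1)):ℕ) * c (x m'.succ) *
      Matrix.det (Matrix.of fun i i' => x ((Fin.succ m').succAbove i) i')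
      = -∑ m : Fin r, (U.updateRow j (V m)).det * (V.updateRow m (U j)).det := by
    rw [← Finset.sum_neg_distrib]
    exact Finset.sum_congr rfl fun m' _ => hterm m'
  rw [hsum] at hzero
  linear_combination hzero
end key


/-- The Plücker coordinate `X_T` of an `r`-dimensional subspace spanned by
`l₁, ..., lᵣ`, with respect to a basis `(e_i)` of `V`, at a tuple
`T = (t₁, ..., tᵣ)` of indices: the determinant `det (coefficient of e_{tₐ} in l_b)`.
This is the coefficient of `e_{t₁} ∧ ... ∧ e_{tᵣ}` in `l₁ ∧ ... ∧ lᵣ` when `T` is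
strictly increasing, extended alternatingly to arbitrary tuples (it is alternating in
the indices and vanishes on tuples with a repeated index). -/
noncomputable def plueckerCoord {k V : Type*} [Field k] [AddCommGroup V] [Module k V]
    {d r : ℕ} (B : Basis (Fin d) k V) (l : Fin r → V) (T : Fin r → Fin d) : k :=
  Matrix.det (Matrix.of fun a b => B.repr (l b) (T a))

/-- The quadratic Plücker relations hold for the Plücker coordinates of an
`r`-dimensional subspace `L` of `V`: for any tuples `S, S'` of indices and any position
`j`, `X_S · X_{S'} = ∑ₘ X_{S with jth entry replaced by s'ₘ} · X_{S' with mth entry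
replaced by sⱼ}`. -/
theorem pluecker_relations {k V : Type*} [Field k] [AddCommGroup V] [Module k V]
    [FiniteDimensional k V] {d r : ℕ} (B : Basis (Fin d) k V)
    (L : Submodule k V) (hL : finrank k ↥L = r) (l : Basis (Fin r) k ↥L)
    (S S' : Fin r → Fin d) (j : Fin r) :
    plueckerCoord B (fun b => (l b : V)) S * plueckerCoord B (fun b => (l b : V)) S' =
      ∑ m : Fin r,
        plueckerCoord B (fun b => (l b : V)) (Function.update S j (S' m)) *
          plueckerCoord B (fun b => (l b : V)) (Function.update S' m (S j)) := by
  have key := pluecker_matrix_key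
    (Matrix.of fun a b => B.repr ((l b : V)) (S a))
    (Matrix.of fun a b => B.repr ((l b : V)) (S' a)) j
  unfold plueckerCoord
  rw [key]
  apply Finset.sum_congr rfl
  intro m _
  congr 1
  · congr 1
    ext a b
    simp only [Matrix.updateRow_apply, Function.update_apply, Matrix.of_apply, apply_ite (B.repr ((l b : V)))]
  · congr 1
    ext a b
    simp only [Matrix.updateRow_apply, Function.update_apply, Matrix.of_apply, apply_ite (B.repr ((l b : V)))]
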